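/- Let f ∈ K[x,y] be a weakly tame polynomial and suppose the K[x,y]-module V_f is generated (not necessarily freely) by the Hamiltonian vector field X₀ = (−f_y, f_x) and a second element X_* = (P_*, Q_*) ∈ V_f with cofactor k_*. Then k_* is a nonzero constant c ∈ K, and consequently f = (P_* f_x + Q_* f_y)/c belongs to the Jacobian ideal J(f) = ⟨f_x, f_y⟩ of K[x,y]. -/

import Mathlib

set_option synthInstance.maxHeartbeats 1000000
set_option maxHeartbeats 1000000


open MvPolynomial

/-- `X ∈ V_f`: the pair `X = (P, Q)` defines a polynomial vector field
`P ∂/∂x + Q ∂/∂y` admitting the curve `f = 0` as an invariant curve,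
i.e. `P f_x + Q f_y = k f` for some cofactor `k`. -/
def VfMem {K : Type*} [Field K] (f : MvPolynomial (Fin 2) K)
    (X : MvPolynomial (Fin 2) K × MvPolynomial (Fin 2) K) : Prop :=
  ∃ k : MvPolynomial (Fin 2) K,
    X.1 * pderiv (0 : Fin 2) f + X.2 * pderiv (1 : Fin 2) f = k * f

section aux
variable {K : Type*} [Field K]

lemma deg0_mul (a b : MvPolynomial (Fin 2) K) (ha : a ≠ 0) (hb : b ≠ 0) :
    degreeOf (0 : Fin 2) (a * b) = degreeOf 0 a + degreeOf 0 b := by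
  have ha' : finSuccEquiv K 1 a ≠ 0 := by
    simpa using (map_ne_zero_iff _ (finSuccEquiv K 1).injective).mpr ha
  have hb' : finSuccEquiv K 1 b ≠ 0 := by
    simpa using (map_ne_zero_iff _ (finSuccEquiv K 1).injective).mpr hb
  rw [← natDegree_finSuccEquiv, ← natDegree_finSuccEquiv, ← natDegree_finSuccEquiv,
    map_mul, Polynomial.natDegree_mul ha' hb']

lemma deg1_eq (q : MvPolynomial (Fin 2) K) :
    degreeOf (1 : Fin 2) q = degreeOf 0 (rename (Equiv.swap (0:Fin 2) 1) q) := by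
  have h := degreeOf_rename_of_injective
    (p := rename (Equiv.swap (0:Fin 2) 1) q) (f := (Equiv.swap (0:Fin 2) 1))
    (Equiv.swap (0:Fin 2) 1).injective 0
  rw [rename_rename] at h
  simp only [Equiv.swap_apply_left] at h
  rw [← h]
  congr 1
  rw [show ((Equiv.swap (0:Fin 2) 1) ∘ (Equiv.swap (0:Fin 2) 1)) = id by
    ext z; simp, rename_id, AlgHom.id_apply]

lemma deg1_mul (a b : MvPolynomial (Fin 2) K) (ha : a ≠ 0) (hb : b ≠ 0) :
    degreeOf (1 : Fin 2) (a * b) = degreeOf 1 a + degreeOf 1 b := by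
  have ha' : rename (Equiv.swap (0:Fin 2) 1) a ≠ 0 := by
    simpa using (map_ne_zero_iff _ (renameEquiv K (Equiv.swap (0:Fin 2) 1)).injective).mpr ha
  have hb' : rename (Equiv.swap (0:Fin 2) 1) b ≠ 0 := by
    simpa using (map_ne_zero_iff _ (renameEquiv K (Equiv.swap (0:Fin 2) 1)).injective).mpr hb
  rw [deg1_eq, deg1_eq a, deg1_eq b, map_mul, deg0_mul _ _ ha' hb']

lemma exists_univar_mem (J : Ideal (MvPolynomial (Fin 2) K))
    (hwt : FiniteDimensional K (MvPolynomial (Fin 2) K ⧸ J)) (i : Fin 2) :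
    ∃ u : MvPolynomial (Fin 2) K, u ∈ J ∧ u ≠ 0 ∧ ∀ j : Fin 2, j ≠ i → degreeOf j u = 0 := by
  classical
  set L : Polynomial K →ₗ[K] (MvPolynomial (Fin 2) K ⧸ J) :=
    (Ideal.Quotient.mkₐ K J).toLinearMap ∘ₗ (Polynomial.aeval (X i : MvPolynomial (Fin 2) K)).toLinearMap with hL
  have hni : ¬ Function.Injective L := by
    intro hinj
    have : FiniteDimensional K (Polynomial K) := FiniteDimensional.of_injective L hinj
    exact Polynomial.not_finite (R := K) this
  rw [← LinearMap.ker_eq_bot] at hni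
  obtain ⟨p, hpk, hp0⟩ := Submodule.ne_bot_iff _ |>.mp hni
  refine ⟨Polynomial.aeval (X i) p, ?_, ?_, ?_⟩
  · have h : Ideal.Quotient.mk J (Polynomial.aeval (X i) p) = 0 := hpk
    exact Ideal.Quotient.eq_zero_iff_mem.mp h
  · intro h0
    set ψ : MvPolynomial (Fin 2) K →ₐ[K] Polynomial K :=
      aeval (fun j => if j = i then Polynomial.X else 0) with hψ
    have : ψ (Polynomial.aeval (X i) p) = p := by
      rw [← Polynomial.aeval_algHom_apply]
      simp [hψ]
    rw [h0, map_zero] at this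
    exact hp0 this.symm
  · intro j hj
    rw [Polynomial.aeval_eq_sum_range]
    refine Nat.le_zero.mp ?_
    refine (degreeOf_sum_le _ _ _).trans ?_
    rw [Finset.sup_le_iff]
    intro n _
    have h1 : degreeOf j (p.coeff n • X i ^ n : MvPolynomial (Fin 2) K) ≤
        degreeOf j ((X i : MvPolynomial (Fin 2) K) ^ n) := by
      rw [smul_eq_C_mul]
      exact degreeOf_C_mul_le _ _ _
    refine h1.trans ?_
    refine (degreeOf_pow_le _ _ _).trans ?_
    rw [degreeOf_X]
    simp [hj]

end aux

/-- If `f ∈ K[x,y]` is weakly tame and `V_f` is generated (not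
necessarily freely) by `X₀ = (-f_y, f_x)` and a second element
`X_* = (P_*, Q_*) ∈ V_f` with cofactor `k_*`, then `k_*` is a nonzero constant
`c ∈ K`, and consequently `f = (P_* f_x + Q_* f_y)/c ∈ J(f) = ⟨f_x, f_y⟩`. -/
theorem stmt2 (K : Type*) [Field K] [Algebra K ℂ]
    (f : MvPolynomial (Fin 2) K)
    (hwt : FiniteDimensional K
      (MvPolynomial (Fin 2) K ⧸
        Ideal.span {pderiv (0 : Fin 2) f, pderiv (1 : Fin 2) f}))
    (Pstar Qstar kstar : MvPolynomial (Fin 2) K)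
    (hcof : Pstar * pderiv (0 : Fin 2) f + Qstar * pderiv (1 : Fin 2) f = kstar * f)
    (hgen : ∀ w, VfMem f w →
      ∃ a b : MvPolynomial (Fin 2) K,
        w = a • (-(pderiv (1 : Fin 2) f), pderiv (0 : Fin 2) f) + b • (Pstar, Qstar)) :
    (∃ c : K, c ≠ 0 ∧ kstar = C c) ∧
      f ∈ Ideal.span {pderiv (0 : Fin 2) f, pderiv (1 : Fin 2) f} := by
  classical
  set fx := pderiv (0 : Fin 2) f with hfx
  set fy := pderiv (1 : Fin 2) f with hfy
  obtain ⟨u, huJ, hu0, hudeg⟩ := exists_univar_mem _ hwt 0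
  obtain ⟨v, hvJ, hv0, hvdeg⟩ := exists_univar_mem _ hwt 1
  -- f ≠ 0
  have hf0 : f ≠ 0 := by
    rintro rfl
    simp only [map_zero] at hfx hfy
    obtain ⟨m, n, hmn⟩ := Ideal.mem_span_pair.mp huJ
    rw [hfx, hfy] at hmn
    simp at hmn
    exact hu0 hmn.symm
  -- from (f, 0)
  obtain ⟨a, b, hab⟩ := hgen (f, 0) ⟨fx, by ring⟩
  rw [Prod.ext_iff] at hab
  obtain ⟨h1a, h1b⟩ := hab
  simp only [Prod.fst_add, Prod.snd_add, Prod.smul_fst, Prod.smul_snd, smul_eq_mul] at h1a h1b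
  obtain ⟨a', b', hab'⟩ := hgen (0, f) ⟨fy, by ring⟩
  rw [Prod.ext_iff] at hab'
  obtain ⟨h2a, h2b⟩ := hab'
  simp only [Prod.fst_add, Prod.snd_add, Prod.smul_fst, Prod.smul_snd, smul_eq_mul] at h2a h2b
  have hbx : fx = b * kstar := by
    have key : f * (fx - b * kstar) = 0 := by
      linear_combination fx * h1a + fy * h1b + b * hcof
    rcases mul_eq_zero.mp key with h | h
    · exact absurd h hf0
    · exact sub_eq_zero.mp h
  have hby : fy = b' * kstar := by
    have key : f * (fy - b' * kstar) = 0 := by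
      linear_combination fy * h2b + fx * h2a + b' * hcof
    rcases mul_eq_zero.mp key with h | h
    · exact absurd h hf0
    · exact sub_eq_zero.mp h
  -- kstar divides u and v
  obtain ⟨m, n, hmu⟩ := Ideal.mem_span_pair.mp huJ
  obtain ⟨m', n', hmv⟩ := Ideal.mem_span_pair.mp hvJ
  have hdu : u = (m * b + n * b') * kstar := by
    rw [← hmu, hbx, hby]; ring
  have hdv : v = (m' * b + n' * b') * kstar := by
    rw [← hmv, hbx, hby]; ring
  have hk0 : kstar ≠ 0 := by
    rintro rfl
    rw [mul_zero] at hdu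
    exact hu0 hdu
  have hs0 : (m * b + n * b') ≠ 0 := by
    rintro h
    rw [h, zero_mul] at hdu
    exact hu0 hdu
  have hs0' : (m' * b + n' * b') ≠ 0 := by
    rintro h
    rw [h, zero_mul] at hdv
    exact hv0 hdv
  -- degrees of kstar are zero
  have hdeg1 : degreeOf (1 : Fin 2) kstar = 0 := by
    have := hudeg 1 (by decide)
    rw [hdu, deg1_mul _ _ hs0 hk0] at this
    omega
  have hdeg0 : degreeOf (0 : Fin 2) kstar = 0 := by
    have := hvdeg 0 (by decide)
    rw [hdv, deg0_mul _ _ hs0' hk0] at this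
    omega
  -- kstar is a constant
  have hkC : kstar = C (coeff 0 kstar) := by
    apply MvPolynomial.ext
    intro mm
    rw [coeff_C]
    by_cases hmm : (0 : Fin 2 →₀ ℕ) = mm
    · rw [if_pos hmm, ← hmm]
    · rw [if_neg hmm]
      by_contra hne
      have hmem : mm ∈ kstar.support := by
        rwa [MvPolynomial.mem_support_iff]
      have e0 : mm 0 ≤ 0 := degreeOf_le_iff.mp (le_of_eq hdeg0) mm hmem
      have e1 : mm 1 ≤ 0 := degreeOf_le_iff.mp (le_of_eq hdeg1) mm hmem
      apply hmm
      ext j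
      have : j = 0 ∨ j = 1 := by omega
      rcases this with rfl | rfl
      · simpa using (Nat.le_zero.mp e0).symm
      · simpa using (Nat.le_zero.mp e1).symm
  have hc0 : coeff 0 kstar ≠ 0 := by
    intro h
    rw [h, map_zero] at hkC
    exact hk0 hkC
  refine ⟨⟨coeff 0 kstar, hc0, hkC⟩, ?_⟩
  rw [Ideal.mem_span_pair]
  refine ⟨C (coeff 0 kstar)⁻¹ * Pstar, C (coeff 0 kstar)⁻¹ * Qstar, ?_⟩
  calc C (coeff 0 kstar)⁻¹ * Pstar * fx + C (coeff 0 kstar)⁻¹ * Qstar * fy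
      = C (coeff 0 kstar)⁻¹ * (Pstar * fx + Qstar * fy) := by ring
    _ = C (coeff 0 kstar)⁻¹ * (C (coeff 0 kstar) * f) := by rw [hcof, ← hkC]
    _ = f := by
        rw [← mul_assoc, ← map_mul, inv_mul_cancel₀ hc0, map_one, one_mul]
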